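/- With G_w as above, G_w/G_w^(k) ≅ H/H^(k), where H is a free group of rank q+1 and X^(k) denotes the k-th derived subgroup. -/
import Mathlib


/-- The generator `s` among the `q + 2` generators `s, t, a₁, …, a_q`. -/
def sGen (q : ℕ) : Fin (q + 2) := ⟨0, by omega⟩

/-- The generator `t`. -/
def tGen (q : ℕ) : Fin (q + 2) := ⟨1, by omega⟩

/-- The generator `aᵢ` (for `i : Fin q`, so `a₁` is `aGen q ⟨0, _⟩`). -/
def aGen (q : ℕ) (i : Fin q) : Fin (q + 2) := ⟨i + 2, by omega⟩

/-- The relator `a₁⁻¹ · w · s⁻¹t⁻¹st` of the one-relator group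
`G_w = ⟨s, t, a₁, …, a_q ; a₁ = w s⁻¹t⁻¹st⟩`. -/
def magnusRelator (q : ℕ) (hq : 1 ≤ q) (w : FreeGroup (Fin (q + 2))) :
    FreeGroup (Fin (q + 2)) :=
  (FreeGroup.of (aGen q ⟨0, hq⟩))⁻¹ * w * (FreeGroup.of (sGen q))⁻¹ *
    (FreeGroup.of (tGen q))⁻¹ * FreeGroup.of (sGen q) * FreeGroup.of (tGen q)

attribute [local instance] derivedSeries_normal

private def fwd (q : ℕ) (hq : 1 ≤ q) (j : Fin (q + 2)) : FreeGroup (Fin (q + 1)) :=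
  have h0 : 0 < q + 1 := by omega
  have h1 : 1 < q + 1 := by omega
  if (j : ℕ) = 0 then FreeGroup.of ⟨0, h0⟩
  else if (j : ℕ) = 1 then FreeGroup.of ⟨1, h1⟩
  else if (j : ℕ) = 2 then
    (FreeGroup.of (⟨0, h0⟩ : Fin (q + 1)))⁻¹ * (FreeGroup.of (⟨1, h1⟩ : Fin (q + 1)))⁻¹ *
      FreeGroup.of (⟨0, h0⟩ : Fin (q + 1)) * FreeGroup.of (⟨1, h1⟩ : Fin (q + 1))
  else FreeGroup.of ⟨(j : ℕ) - 1, by have := j.isLt; omega⟩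

private def bwd (q : ℕ) (j : Fin (q + 1)) : FreeGroup (Fin (q + 2)) :=
  have h0 : 0 < q + 2 := by omega
  have h1 : 1 < q + 2 := by omega
  if (j : ℕ) = 0 then FreeGroup.of ⟨0, h0⟩
  else if (j : ℕ) = 1 then FreeGroup.of ⟨1, h1⟩
  else FreeGroup.of ⟨(j : ℕ) + 1, by have := j.isLt; omega⟩

private lemma fwd_bwd (q : ℕ) (hq : 1 ≤ q) (j : Fin (q + 1)) :
    FreeGroup.lift (fwd q hq) (bwd q j) = FreeGroup.of j := by
  obtain ⟨(_ | _ | n), hj⟩ := j <;> simp [bwd, fwd]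

private lemma derivedSeries_quotient_self_bot (G : Type*) [Group G] (k : ℕ) :
    derivedSeries (G ⧸ derivedSeries G k) k = ⊥ := by
  rw [← map_derivedSeries_eq (QuotientGroup.mk'_surjective (derivedSeries G k)) k,
    Subgroup.map_eq_bot_iff, QuotientGroup.ker_mk']

private lemma hom_to_quot_one {G H : Type*} [Group G] [Group H] (k : ℕ)
    (f : G →* H ⧸ derivedSeries H k) {x : G} (hx : x ∈ derivedSeries G k) : f x = 1 := by
  have : f x ∈ derivedSeries (H ⧸ derivedSeries H k) k :=
    map_derivedSeries_le_derivedSeries f k ⟨x, hx, rfl⟩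
  rwa [derivedSeries_quotient_self_bot, Subgroup.mem_bot] at this

section Main

variable {q : ℕ} (hq : 1 ≤ q) {k : ℕ} {w : FreeGroup (Fin (q + 2))}

private lemma hw_one (hk : w ∈ derivedSeries (FreeGroup (Fin (q + 2))) k) :
    (QuotientGroup.mk' (derivedSeries (FreeGroup (Fin (q + 1))) k))
      (FreeGroup.lift (fwd q hq) w) = 1 := by
  rw [← MonoidHom.mem_ker, QuotientGroup.ker_mk']
  exact map_derivedSeries_le_derivedSeries (FreeGroup.lift (fwd q hq)) k ⟨w, hk, rfl⟩

private lemma hliftcomp :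
    FreeGroup.lift (fun j =>
      (QuotientGroup.mk' (derivedSeries (FreeGroup (Fin (q + 1))) k)) (fwd q hq j)) =
    (QuotientGroup.mk' (derivedSeries (FreeGroup (Fin (q + 1))) k)).comp
      (FreeGroup.lift (fwd q hq)) := by
  ext j; simp

private lemma hrel (hk : w ∈ derivedSeries (FreeGroup (Fin (q + 2))) k) :
    ∀ r ∈ ({magnusRelator q hq w} : Set (FreeGroup (Fin (q + 2)))),
      FreeGroup.lift (fun j =>
        (QuotientGroup.mk' (derivedSeries (FreeGroup (Fin (q + 1))) k)) (fwd q hq j)) r = 1 := by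
  intro r hr
  rw [Set.mem_singleton_iff] at hr
  subst hr
  rw [hliftcomp]
  simp only [magnusRelator, MonoidHom.comp_apply, map_mul, map_inv, FreeGroup.lift_apply_of,
    hw_one hq hk]
  simp only [fwd, sGen, tGen, aGen]
  norm_num
  group

private def Phi (hk : w ∈ derivedSeries (FreeGroup (Fin (q + 2))) k) :
    (PresentedGroup ({magnusRelator q hq w} : Set (FreeGroup (Fin (q + 2)))) ⧸
      derivedSeries (PresentedGroup ({magnusRelator q hq w} : Set (FreeGroup (Fin (q + 2))))) k)
      →* FreeGroup (Fin (q + 1)) ⧸ derivedSeries (FreeGroup (Fin (q + 1))) k :=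
  QuotientGroup.lift _ (PresentedGroup.toGroup (hrel hq hk))
    (fun _ hx => hom_to_quot_one k _ hx)

/-- the canonical map from the free group on `q+2` letters to `Gw ⧸ Dk Gw`. -/
private def pmap (q : ℕ) (hq : 1 ≤ q) (w : FreeGroup (Fin (q + 2))) (k : ℕ) :
    FreeGroup (Fin (q + 2)) →*
    (PresentedGroup ({magnusRelator q hq w} : Set (FreeGroup (Fin (q + 2)))) ⧸
      derivedSeries (PresentedGroup ({magnusRelator q hq w} : Set (FreeGroup (Fin (q + 2))))) k) :=
  (QuotientGroup.mk' _).comp (PresentedGroup.mk _)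

private def Psi (q : ℕ) (hq : 1 ≤ q) (w : FreeGroup (Fin (q + 2))) (k : ℕ) :
    (FreeGroup (Fin (q + 1)) ⧸ derivedSeries (FreeGroup (Fin (q + 1))) k) →*
    (PresentedGroup ({magnusRelator q hq w} : Set (FreeGroup (Fin (q + 2)))) ⧸
      derivedSeries (PresentedGroup ({magnusRelator q hq w} : Set (FreeGroup (Fin (q + 2))))) k) :=
  QuotientGroup.lift _
    (FreeGroup.lift (fun j => pmap q hq w k (bwd q j)))
    (fun _ hx => hom_to_quot_one k _ hx)

private lemma Psi_mk (x : FreeGroup (Fin (q + 1))) :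
    Psi q hq w k ((QuotientGroup.mk' (derivedSeries (FreeGroup (Fin (q + 1))) k)) x) =
      FreeGroup.lift (fun j => pmap q hq w k (bwd q j)) x := rfl

private lemma Phi_pmap (hk : w ∈ derivedSeries (FreeGroup (Fin (q + 2))) k)
    (x : FreeGroup (Fin (q + 2))) :
    Phi hq hk (pmap q hq w k x) =
      FreeGroup.lift (fun j =>
        (QuotientGroup.mk' (derivedSeries (FreeGroup (Fin (q + 1))) k)) (fwd q hq j)) x := rfl

private lemma Phi_Psi (hk : w ∈ derivedSeries (FreeGroup (Fin (q + 2))) k) :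
    (Phi hq hk).comp (Psi q hq w k) = MonoidHom.id _ := by
  refine QuotientGroup.monoidHom_ext _ (FreeGroup.ext_hom _ _ fun j => ?_)
  simp only [MonoidHom.comp_apply, MonoidHom.id_apply, Psi_mk, FreeGroup.lift_apply_of,
    Phi_pmap hq hk, hliftcomp, fwd_bwd]

private lemma pmap_w_one (hk : w ∈ derivedSeries (FreeGroup (Fin (q + 2))) k) :
    pmap q hq w k w = 1 :=
  hom_to_quot_one k _ hk

private lemma pmap_rel_one : pmap q hq w k (magnusRelator q hq w) = 1 := by
  have h1 : PresentedGroup.mk ({magnusRelator q hq w} : Set (FreeGroup (Fin (q + 2))))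
      (magnusRelator q hq w) = 1 :=
    (QuotientGroup.eq_one_iff _).mpr (Subgroup.subset_normalClosure (Set.mem_singleton _))
  show (QuotientGroup.mk' _) (PresentedGroup.mk _ (magnusRelator q hq w)) = 1
  rw [h1, map_one]

private lemma comm_aux {Q : Type*} [Group Q] {A Pw S T : Q}
    (h : A⁻¹ * Pw * S⁻¹ * T⁻¹ * S * T = 1) (hw : Pw = 1) : S⁻¹ * T⁻¹ * S * T = A := by
  rw [hw, mul_one] at h
  have h2 : A⁻¹ * (S⁻¹ * T⁻¹ * S * T) = 1 := by rw [← h]; group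
  exact (inv_mul_eq_one.mp h2).symm

private lemma pmap_comm (hk : w ∈ derivedSeries (FreeGroup (Fin (q + 2))) k) :
    (pmap q hq w k (FreeGroup.of (sGen q)))⁻¹ * (pmap q hq w k (FreeGroup.of (tGen q)))⁻¹ *
      pmap q hq w k (FreeGroup.of (sGen q)) * pmap q hq w k (FreeGroup.of (tGen q)) =
      pmap q hq w k (FreeGroup.of (aGen q ⟨0, hq⟩)) := by
  have h1 := pmap_rel_one (q := q) (hq := hq) (w := w) (k := k)
  simp only [magnusRelator, map_mul, map_inv] at h1
  exact comm_aux h1 (pmap_w_one hq hk)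

private lemma Psi_Phi (hk : w ∈ derivedSeries (FreeGroup (Fin (q + 2))) k) :
    (Psi q hq w k).comp (Phi hq hk) = MonoidHom.id _ := by
  refine QuotientGroup.monoidHom_ext _ (PresentedGroup.ext fun i => ?_)
  have hof : (QuotientGroup.mk' (derivedSeries (PresentedGroup
      ({magnusRelator q hq w} : Set (FreeGroup (Fin (q + 2))))) k)) (PresentedGroup.of i) =
      pmap q hq w k (FreeGroup.of i) := rfl
  simp only [MonoidHom.comp_apply, MonoidHom.id_apply, hof]
  have h1 : Phi hq hk (pmap q hq w k (FreeGroup.of i)) =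
      (QuotientGroup.mk' (derivedSeries (FreeGroup (Fin (q + 1))) k)) (fwd q hq i) := by
    rw [Phi_pmap hq hk, FreeGroup.lift_apply_of]
  rw [h1, Psi_mk]
  obtain ⟨(_ | _ | _ | n), hi⟩ := i
  · simp [fwd, bwd]
  · simp [fwd, bwd]
  · have hfwd : fwd q hq ⟨2, hi⟩ =
        (FreeGroup.of (⟨0, by omega⟩ : Fin (q + 1)))⁻¹ *
          (FreeGroup.of (⟨1, by omega⟩ : Fin (q + 1)))⁻¹ *
          FreeGroup.of (⟨0, by omega⟩ : Fin (q + 1)) *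
          FreeGroup.of (⟨1, by omega⟩ : Fin (q + 1)) := by
      simp [fwd]
    rw [hfwd]
    simp only [map_mul, map_inv, FreeGroup.lift_apply_of]
    exact (pmap_comm hq hk).trans rfl
  · have hfwd : fwd q hq ⟨n + 1 + 1 + 1, hi⟩ = FreeGroup.of ⟨n + 2, by omega⟩ := by
      simp [fwd]
    rw [hfwd, FreeGroup.lift_apply_of]
    have hb : bwd q ⟨n + 2, by omega⟩ = FreeGroup.of ⟨n + 3, by omega⟩ := by simp [bwd]
    rw [hb]

end Main

/-- With `G_w = ⟨s, t, a₁, …, a_q ; a₁ = w s⁻¹t⁻¹st⟩`, where `w` involves `a₁`,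
does not involve `s`, and lies in the `k`-th derived subgroup,
`G_w / G_w^(k) ≅ H / H^(k)` where `H` is free of rank `q + 1`. -/
theorem Gw_derived_quotient_iso (q : ℕ) (hq : 1 ≤ q) (k : ℕ)
    (w : FreeGroup (Fin (q + 2)))
    (ha : aGen q ⟨0, hq⟩ ∈ w.toWord.map Prod.fst)
    (hs : sGen q ∉ w.toWord.map Prod.fst)
    (hk : w ∈ derivedSeries (FreeGroup (Fin (q + 2))) k) :
    letI Gw := PresentedGroup ({magnusRelator q hq w} : Set (FreeGroup (Fin (q + 2))))
    letI := derivedSeries_normal Gw k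
    letI := derivedSeries_normal (FreeGroup (Fin (q + 1))) k
    Nonempty ((Gw ⧸ derivedSeries Gw k) ≃*
      (FreeGroup (Fin (q + 1)) ⧸ derivedSeries (FreeGroup (Fin (q + 1))) k)) := by
  exact ⟨MonoidHom.toMulEquiv (Phi hq hk) (Psi q hq w k) (Psi_Phi hq hk) (Phi_Psi hq hk)⟩
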